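/- Assume |c₁| = C, |c_s| ≤ (C/s) C_r^{s−1} for s = 2,...,r, where C_r = 64 r² C_*, and assume ρ < R* with (R*)² = 2/(3(1+e)C_r). Then the Lagrange multiplier λ₀ = 2 Σ_{s=1}^r s c_s ρ^{2s} (with c₁ > 0) satisfies |λ₀| ≥ 2Cρ² − 2 Σ_{s=2}^r s|c_s|ρ^{2s} > (5/7) C ρ². -/

import Mathlib

lemma geo_aux (q : ℝ) (h0 : 0 ≤ q) (h1 : q < 1) (n : ℕ) :
    ∑ i ∈ Finset.range n, q ^ i ≤ 1 / (1 - q) := by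
  have hpos : 0 < 1 - q := by linarith
  rw [le_div_iff₀ hpos]
  have hg := geom_sum_mul q n
  have hq : 0 ≤ q ^ n := pow_nonneg h0 n
  nlinarith [hg]

/-- Under the Birkhoff-coefficient bounds |c₁| = C, |c_s| ≤ (C/s)C_r^{s−1}
(C_r = 64r²C_*), and the smallness condition ρ < R* with
(R*)² = 2/(3(1+e)C_r), the Lagrange multiplier λ₀ = 2Σ_{s=1}^r s c_s ρ^{2s}
satisfies |λ₀| ≥ 2Cρ² − 2Σ_{s=2}^r s|c_s|ρ^{2s} > (5/7)Cρ². -/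
theorem lagrange_multiplier_lower_bound (r : ℕ) (hr : 1 ≤ r)
    (C Cstar : ℝ) (hC : 0 < C) (hCstar : 0 < Cstar)
    (Cr : ℝ) (hCr : Cr = 64 * (r : ℝ)^2 * Cstar)
    (c : ℕ → ℝ) (hc1 : |c 1| = C) (hc1pos : 0 < c 1)
    (hcs : ∀ s ∈ Finset.Icc 2 r, |c s| ≤ C / (s : ℝ) * Cr ^ (s - 1))
    (ρ Rstar : ℝ) (hρ : 0 < ρ)
    (hRstar : Rstar = Real.sqrt (2 / (3 * (1 + Real.exp 1) * Cr)))
    (hρR : ρ < Rstar)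
    (lam₀ : ℝ)
    (hlam₀ : lam₀ = 2 * ∑ s ∈ Finset.Icc 1 r, (s : ℝ) * c s * ρ ^ (2*s)) :
    |lam₀| ≥ 2 * C * ρ^2 - 2 * ∑ s ∈ Finset.Icc 2 r, (s : ℝ) * |c s| * ρ ^ (2*s) ∧
    2 * C * ρ^2 - 2 * ∑ s ∈ Finset.Icc 2 r, (s : ℝ) * |c s| * ρ ^ (2*s)
      > (5/7) * C * ρ^2 := by
  have hrpos : (0:ℝ) < (r:ℝ) := by exact_mod_cast hr
  have hCrpos : 0 < Cr := by rw [hCr]; positivity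
  have he : (2.7 : ℝ) < Real.exp 1 := by
    have := Real.exp_one_gt_d9; linarith
  have hden : (0:ℝ) < 3 * (1 + Real.exp 1) * Cr := by positivity
  -- ρ² < (R*)²
  have hρ2 : ρ^2 < 2 / (3 * (1 + Real.exp 1) * Cr) := by
    have h1 : ρ^2 < Rstar^2 := by
      have := Real.sqrt_nonneg (2 / (3 * (1 + Real.exp 1) * Cr))
      nlinarith [hρR, hρ]
    have h2 : Rstar^2 = 2 / (3 * (1 + Real.exp 1) * Cr) := by
      rw [hRstar, Real.sq_sqrt (le_of_lt (by positivity))]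
    linarith [h2 ▸ h1]
  set q := Cr * ρ^2 with hqdef
  have hq0 : 0 < q := by positivity
  have hq11 : q < 2 / 11 := by
    have : Cr * ρ^2 < Cr * (2 / (3 * (1 + Real.exp 1) * Cr)) :=
      (mul_lt_mul_iff_right₀ hCrpos).mpr hρ2
    have h3 : Cr * (2 / (3 * (1 + Real.exp 1) * Cr)) = 2 / (3 * (1 + Real.exp 1)) := by
      field_simp
    rw [h3] at this
    have h4 : 2 / (3 * (1 + Real.exp 1)) < 2 / 11 := by
      apply div_lt_div_of_pos_left <;> nlinarith
    linarith
  have hq1 : q < 1 := by linarith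
  -- bound on the sum S
  set S := ∑ s ∈ Finset.Icc 2 r, (s : ℝ) * |c s| * ρ ^ (2*s) with hSdef
  have hterm : ∀ s ∈ Finset.Icc 2 r,
      (s : ℝ) * |c s| * ρ ^ (2*s) ≤ C * ρ^2 * q ^ (s - 1) := by
    intro s hs
    rw [Finset.mem_Icc] at hs
    have hs2 : 2 ≤ s := hs.1
    have hspos : (0:ℝ) < (s:ℝ) := by exact_mod_cast (by omega : 0 < s)
    have hcb := hcs s (Finset.mem_Icc.mpr hs)
    have hρpow : ρ ^ (2*s) = ρ^2 * (ρ^2) ^ (s-1) := by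
      rw [← pow_mul]
      rw [← pow_add]
      congr 1
      omega
    have h1 : (s : ℝ) * |c s| ≤ C * Cr ^ (s-1) := by
      have := mul_le_mul_of_nonneg_left hcb (le_of_lt hspos)
      calc (s : ℝ) * |c s| ≤ (s:ℝ) * (C / (s:ℝ) * Cr ^ (s-1)) := this
        _ = C * Cr ^ (s-1) := by field_simp
    have hρnn : (0:ℝ) ≤ ρ ^ (2*s) := by positivity
    calc (s : ℝ) * |c s| * ρ ^ (2*s) ≤ C * Cr ^ (s-1) * ρ ^ (2*s) :=
          mul_le_mul_of_nonneg_right h1 hρnn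
      _ = C * ρ^2 * q ^ (s-1) := by
          rw [hρpow, hqdef, mul_pow]; ring
  have hsum1 : S ≤ C * ρ^2 * ∑ s ∈ Finset.Icc 2 r, q ^ (s - 1) := by
    rw [Finset.mul_sum]
    exact Finset.sum_le_sum hterm
  have hsum2 : ∑ s ∈ Finset.Icc 2 r, q ^ (s - 1) ≤ q * (1 / (1 - q)) := by
    rw [← Finset.Ico_add_one_right_eq_Icc, Finset.sum_Ico_eq_sum_range]
    have heq : ∀ i, q ^ (2 + i - 1) = q * q ^ i := by
      intro i
      rw [show 2 + i - 1 = i + 1 by omega, pow_succ]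
      ring
    calc ∑ i ∈ Finset.range (r + 1 - 2), q ^ (2 + i - 1)
        = q * ∑ i ∈ Finset.range (r + 1 - 2), q ^ i := by
          rw [Finset.mul_sum]; exact Finset.sum_congr rfl fun i _ => heq i
      _ ≤ q * (1 / (1 - q)) := by
          apply mul_le_mul_of_nonneg_left (geo_aux q (le_of_lt hq0) hq1 _) (le_of_lt hq0)
  have hSbound : S < 9/14 * (C * ρ^2) := by
    have h1 : q * (1 / (1 - q)) < 9/14 := by
      rw [mul_one_div, div_lt_iff₀ (by linarith : (0:ℝ) < 1 - q)]
      nlinarith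
    have hCρ : 0 < C * ρ^2 := by positivity
    calc S ≤ C * ρ^2 * (q * (1 / (1 - q))) := le_trans hsum1
          (mul_le_mul_of_nonneg_left hsum2 (le_of_lt hCρ)) 
      _ < C * ρ^2 * (9/14) := (mul_lt_mul_iff_right₀ hCρ).mpr h1
      _ = 9/14 * (C * ρ^2) := by ring
  constructor
  · -- |λ₀| ≥ 2Cρ² − 2S
    have hsplit : Finset.Icc 1 r = insert 1 (Finset.Icc 2 r) := by
      ext x
      simp only [Finset.mem_Icc, Finset.mem_insert]
      omega
    have hnotmem : 1 ∉ Finset.Icc 2 r := by simp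
    have hlam : lam₀ = 2 * (c 1 * ρ^2) +
        2 * ∑ s ∈ Finset.Icc 2 r, (s : ℝ) * c s * ρ ^ (2*s) := by
      rw [hlam₀, hsplit, Finset.sum_insert hnotmem]
      push_cast
      ring
    set T := ∑ s ∈ Finset.Icc 2 r, (s : ℝ) * c s * ρ ^ (2*s) with hTdef
    have hTS : |T| ≤ S := by
      calc |T| ≤ ∑ s ∈ Finset.Icc 2 r, |(s : ℝ) * c s * ρ ^ (2*s)| :=
            Finset.abs_sum_le_sum_abs _ _
        _ = S := by
            apply Finset.sum_congr rfl
            intro s hs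
            rw [abs_mul, abs_mul, abs_of_nonneg (by positivity : (0:ℝ) ≤ (s:ℝ)),
              abs_of_nonneg (by positivity : (0:ℝ) ≤ ρ ^ (2*s))]
    have hc1C : c 1 = C := by rw [← hc1, abs_of_pos hc1pos]
    have h1 : lam₀ ≥ 2 * C * ρ^2 - 2 * S := by
      rw [hlam, hc1C]
      have := neg_abs_le T
      linarith
    linarith [le_abs_self lam₀]
  · linarith
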